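/- The three-fermion state w_{ijk} = (1/3)(x ε^{ijk456} + y ε^{12i4jk}) with x, y both nonzero does not have Slater rank one; concretely, for a = e₃ the projected antisymmetric matrix v_{ij} = Σ_k w_{ijk} a_k is proportional to x (E₁₂ − E₂₁) + y (E₅₆ − E₆₅), which has rank 4. -/

import Mathlib

open Matrix

/-- The Levi-Civita symbol: the sign of `f` if `f` is a permutation, `0` otherwise. -/
noncomputable def levi {n : ℕ} (f : Fin n → Fin n) : ℂ :=
  if h : Function.Bijective f then (((Equiv.Perm.sign (Equiv.ofBijective f h)) : ℤ) : ℂ)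
  else 0

lemma levi_zero {n : ℕ} (f : Fin n → Fin n) (h : ¬ Function.Bijective f) : levi f = 0 :=
  dif_neg h

lemma levi_sign (f : Fin 6 → Fin 6) (σ : Equiv.Perm (Fin 6)) (h : ∀ i, f i = σ i) :
    levi f = ((Equiv.Perm.sign σ : ℤ) : ℂ) := by
  have hf : f = ⇑σ := funext h
  subst hf
  have h2 : Equiv.ofBijective (⇑σ) σ.bijective = σ := Equiv.ext fun i => rfl
  rw [levi, dif_pos σ.bijective, h2]

lemma levi_one (f : Fin 6 → Fin 6) (σ : Equiv.Perm (Fin 6)) (h : ∀ i, f i = σ i)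
    (hs : Equiv.Perm.sign σ = 1) : levi f = 1 := by
  rw [levi_sign f σ h, hs]; norm_num

lemma levi_neg_one (f : Fin 6 → Fin 6) (σ : Equiv.Perm (Fin 6)) (h : ∀ i, f i = σ i)
    (hs : Equiv.Perm.sign σ = -1) : levi f = -1 := by
  rw [levi_sign f σ h, hs]; norm_num

lemma sum_comm4 (f : Fin 6 → Fin 6 → Fin 6 → Fin 6 → ℂ) :
    ∑ m, ∑ l, ∑ n, ∑ k, f m l n k = ∑ k, ∑ m, ∑ l, ∑ n, f m l n k := by
  calc ∑ m, ∑ l, ∑ n, ∑ k, f m l n k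
      = ∑ m, ∑ l, ∑ k, ∑ n, f m l n k :=
        Finset.sum_congr rfl fun m _ => Finset.sum_congr rfl fun l _ => Finset.sum_comm
    _ = ∑ m, ∑ k, ∑ l, ∑ n, f m l n k :=
        Finset.sum_congr rfl fun m _ => Finset.sum_comm
    _ = ∑ k, ∑ m, ∑ l, ∑ n, f m l n k := Finset.sum_comm

set_option maxHeartbeats 2000000 in
set_option maxRecDepth 16000 in
/-- the three-fermion state `w_{ijk} = (1/3)(x ε^{ijk456} + y ε^{12i4jk})`
(indices written here zero-based) with `x, y ≠ 0` does not have Slater rank one: for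
`a = e₃` the projected matrix `v_{ij} = Σ_k w_{ijk} a_k` is proportional to
`x(E₁₂ − E₂₁) + y(E₅₆ − E₆₅)` and has rank 4. -/
theorem three_fermion_example_correlated (x y : ℂ) (hx : x ≠ 0) (hy : y ≠ 0) :
    let w : Fin 6 → Fin 6 → Fin 6 → ℂ := fun i j k =>
      (1 / 3) * (x * levi ![i, j, k, 3, 4, 5] + y * levi ![0, 1, i, 3, j, k])
    let v : Matrix (Fin 6) (Fin 6) ℂ :=
      Matrix.of fun i j => ∑ k, w i j k * (if k = 2 then 1 else 0)
    (v = ((3 : ℂ)⁻¹) •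
        (x • (Matrix.single 0 1 (1 : ℂ) - Matrix.single 1 0 (1 : ℂ)) +
         y • (Matrix.single 4 5 (1 : ℂ) - Matrix.single 5 4 (1 : ℂ)))) ∧
    v.rank = 4 ∧
    ¬ (∃ U : Matrix (Fin 6) (Fin 6) ℂ, U ∈ Matrix.unitaryGroup (Fin 6) ℂ ∧
        ∃ z : ℂ, z ≠ 0 ∧
          ∀ i j k : Fin 6,
            (∑ l, ∑ m, ∑ n, w l m n * U i l * U j m * U k n) =
              z * levi ![i, j, k, 3, 4, 5]) := by
  intro w v
  have hentry : ∀ i j, v i j = (1/3) * (x * levi ![i,j,2,3,4,5] + y * levi ![0,1,i,3,j,2]) := by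
    intro i j
    show (∑ k, w i j k * (if k = 2 then 1 else 0)) = _
    simp only [mul_ite, mul_one, mul_zero, Finset.sum_ite_eq', Finset.mem_univ, if_true]
    rfl
  have goal1 : v = ((3 : ℂ)⁻¹) •
        (x • (Matrix.single 0 1 (1 : ℂ) - Matrix.single 1 0 (1 : ℂ)) +
         y • (Matrix.single 4 5 (1 : ℂ) - Matrix.single 5 4 (1 : ℂ))) := by
    ext i j
    rw [hentry i j]
    fin_cases i <;> fin_cases j <;>
      first
      | (rw [levi_one _ 1 (by decide) (by decide), levi_zero _ (by decide)];
         simp [Matrix.single]; try ring)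
      | (rw [levi_neg_one _ (Equiv.swap 0 1) (by decide) (by decide), levi_zero _ (by decide)];
         simp [Matrix.single]; try ring)
      | (rw [levi_zero _ (by decide), levi_one _ (Equiv.swap 2 4 * Equiv.swap 4 5) (by decide) (by decide)];
         simp [Matrix.single]; try ring)
      | (rw [levi_zero _ (by decide), levi_neg_one _ (Equiv.swap 2 5) (by decide) (by decide)];
         simp [Matrix.single]; try ring)
      | (rw [levi_zero _ (by decide), levi_zero _ (by decide)];
         simp [Matrix.single])
  classical
  have goal2 : v.rank = 4 := by
    set σp : Equiv.Perm (Fin 6) := Equiv.swap 0 1 * Equiv.swap 4 5 with hσp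
    set P : Matrix (Fin 6) (Fin 6) ℂ := σp.permMatrix ℂ with hP
    set d : Fin 6 → ℂ := fun i =>
      if i = 0 then 3⁻¹ * x else if i = 1 then -(3⁻¹ * x)
      else if i = 4 then 3⁻¹ * y else if i = 5 then -(3⁻¹ * y) else 0 with hd
    have hσfun : ⇑σp = fun i =>
        if i = 0 then 1 else if i = 1 then 0
        else if i = 4 then 5 else if i = 5 then 4 else i := funext (by decide)
    have hvP : v * P = Matrix.diagonal d := by
      rw [goal1]
      ext i j
      fin_cases i <;> fin_cases j <;>
        simp [hP, hd, Matrix.mul_apply, Fin.sum_univ_six, Equiv.Perm.permMatrix,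
          PEquiv.toMatrix_apply, Equiv.toPEquiv_apply, hσfun, Matrix.single,
          Matrix.diagonal] <;> try ring
    have hdetP : IsUnit P.det := by
      rw [hP, Matrix.det_permutation, show Equiv.Perm.sign σp = 1 from by decide]
      simp
    rw [← Matrix.rank_mul_eq_left_of_isUnit_det P v hdetP, hvP, Matrix.rank_diagonal]
    rw [Fintype.card_subtype]
    have hfil : (Finset.univ.filter fun i => d i ≠ 0) = {0, 1, 4, 5} := by
      ext i
      fin_cases i <;> simp [hd, hx, hy]
    rw [hfil]
    rfl
  refine ⟨goal1, goal2, ?_⟩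
  rintro ⟨U, hU, z, hz, hW⟩
  have hUU : star U * U = 1 := Matrix.mem_unitaryGroup_iff'.mp hU
  have horth : ∀ n n' : Fin 6, (∑ k, U k n * star (U k n')) = if n = n' then 1 else 0 := by
    intro n n'
    have h := congrFun (congrFun hUU n') n
    simp only [Matrix.mul_apply, Matrix.star_apply, Matrix.one_apply] at h
    calc ∑ k, U k n * star (U k n') = ∑ k, star (U k n') * U k n :=
          Finset.sum_congr rfl fun k _ => mul_comm _ _
      _ = if n' = n then 1 else 0 := h
      _ = if n = n' then 1 else 0 := by
          by_cases hnn : n = n'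
          · simp [hnn]
          · rw [if_neg hnn, if_neg (fun h' => hnn (Eq.symm h'))]
  have hdetU : IsUnit U.det := by
    have h := congrArg Matrix.det hUU
    rw [Matrix.det_mul, Matrix.det_one] at h
    exact IsUnit.of_mul_eq_one (a := U.det) (star U).det (by rw [mul_comm]; exact h)
  set c : Fin 6 → ℂ := fun k => star (U k 2) with hc
  have hval : ∀ l m, v l m = ∑ n, ∑ k, w l m n * (U k n * c k) := by
    intro l m
    show (∑ n, w l m n * (if n = 2 then 1 else 0)) = _
    refine Finset.sum_congr rfl fun n _ => ?_
    rw [← horth n 2, Finset.mul_sum]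
  set M : Matrix (Fin 6) (Fin 6) ℂ :=
    Matrix.of (fun i j => ∑ k, (z * levi ![i, j, k, 3, 4, 5]) * c k) with hM
  have hUvU : U * v * Uᵀ = M := by
    ext i j
    show (U * v * Uᵀ) i j = ∑ k, (z * levi ![i, j, k, 3, 4, 5]) * c k
    have lhs1 : (U * v * Uᵀ) i j = ∑ m, ∑ l, U i l * v l m * U j m := by
      simp only [Matrix.mul_apply, Matrix.transpose_apply, Finset.sum_mul]
    rw [lhs1]
    calc ∑ m, ∑ l, U i l * v l m * U j m
        = ∑ m, ∑ l, ∑ n, ∑ k, (w l m n * U i l * U j m * U k n) * c k := by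
          refine Finset.sum_congr rfl fun m _ => Finset.sum_congr rfl fun l _ => ?_
          rw [hval l m, Finset.mul_sum, Finset.sum_mul]
          refine Finset.sum_congr rfl fun n _ => ?_
          rw [Finset.mul_sum, Finset.sum_mul]
          refine Finset.sum_congr rfl fun k _ => ?_
          ring
      _ = ∑ k, ∑ m, ∑ l, ∑ n, (w l m n * U i l * U j m * U k n) * c k := sum_comm4 _
      _ = ∑ k, (∑ l, ∑ m, ∑ n, w l m n * U i l * U j m * U k n) * c k := by
          refine Finset.sum_congr rfl fun k _ => ?_
          simp only [Finset.sum_mul]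
          exact Finset.sum_comm
      _ = ∑ k, (z * levi ![i, j, k, 3, 4, 5]) * c k :=
          Finset.sum_congr rfl fun k _ => by rw [hW i j k]
  have hlevi0 : ∀ (i j k : Fin 6), i = 3 ∨ i = 4 ∨ i = 5 → levi ![i, j, k, 3, 4, 5] = 0 := by
    intro i j k hi
    rcases hi with rfl | rfl | rfl
    · exact levi_zero _ fun hb => absurd
        (hb.injective (show (![3, j, k, 3, 4, 5]) 0 = (![3, j, k, 3, 4, 5]) 3 from rfl))
        (by decide)
    · exact levi_zero _ fun hb => absurd
        (hb.injective (show (![4, j, k, 3, 4, 5]) 0 = (![4, j, k, 3, 4, 5]) 4 from rfl))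
        (by decide)
    · exact levi_zero _ fun hb => absurd
        (hb.injective (show (![5, j, k, 3, 4, 5]) 0 = (![5, j, k, 3, 4, 5]) 5 from rfl))
        (by decide)
  have hrow : ∀ i, (i = 3 ∨ i = 4 ∨ i = 5) → ∀ j, M i j = 0 := by
    intro i hi j
    show (∑ k, (z * levi ![i, j, k, 3, 4, 5]) * c k) = 0
    refine Finset.sum_eq_zero fun k _ => ?_
    rw [hlevi0 i j k hi]
    ring
  have hrankM : M.rank ≤ 3 := by
    set B : Matrix (Fin 3) (Fin 6) ℂ :=
      Matrix.of (fun a j => M (Fin.castLE (by norm_num) a) j) with hB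
    set Q : Matrix (Fin 6) (Fin 3) ℂ :=
      Matrix.of (fun i a => if i = Fin.castLE (by norm_num) a then 1 else 0) with hQ
    have hfact : M = Q * B := by
      ext i j
      rw [Matrix.mul_apply]
      fin_cases i
      · simp [hQ, hB, Fin.sum_univ_three, Fin.castLE]
      · simp [hQ, hB, Fin.sum_univ_three, Fin.castLE]
      · simp [hQ, hB, Fin.sum_univ_three, Fin.castLE]
      · rw [hrow _ (by decide) j]
        refine (Finset.sum_eq_zero fun a _ => ?_).symm
        fin_cases a <;> simp [hQ, Fin.castLE]
      · rw [hrow _ (by decide) j]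
        refine (Finset.sum_eq_zero fun a _ => ?_).symm
        fin_cases a <;> simp [hQ, Fin.castLE]
      · rw [hrow _ (by decide) j]
        refine (Finset.sum_eq_zero fun a _ => ?_).symm
        fin_cases a <;> simp [hQ, Fin.castLE]
    rw [hfact]
    calc (Q * B).rank ≤ B.rank := Matrix.rank_mul_le_right Q B
      _ ≤ 3 := by simpa using B.rank_le_card_height
  have hr1 : (U * v * Uᵀ).rank = v.rank := by
    rw [Matrix.rank_mul_eq_left_of_isUnit_det Uᵀ (U * v) (by rwa [Matrix.det_transpose])]
    exact Matrix.rank_mul_eq_right_of_isUnit_det U v hdetU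
  rw [hUvU, goal2] at hr1
  omega
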